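/- Let p be an odd prime and r a positive integer. Then Σ_{i+j+k=2p^r, i,j,k∈𝒫_p} (−1)^i/(ijk) ≡ 2 · Σ_{i+j+k=p^r, i,j,k∈𝒫_p} (−1)^i/(ijk) (mod p^r), where each sum is over triples of positive integers with the indicated sum and all entries coprime to p. -/

import Mathlib

section Aux
variable {p : ℕ} [hf : Fact p.Prime]

lemma myNormOne {n : ℕ} (h : ¬ p ∣ n) : padicNorm p (n : ℚ) = 1 :=
  (padicNorm.nat_eq_one_iff n).mpr h

lemma myNormPpow (r : ℕ) : padicNorm p (((p ^ r : ℕ) : ℚ)) = (p : ℚ) ^ (-(r : ℤ)) := by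
  induction r with
  | zero => simp [padicNorm.one]
  | succ n ih =>
    push_cast at ih ⊢
    rw [pow_succ, padicNorm.mul, ih, padicNorm.padicNorm_p hf.out.one_lt,
      neg_add, zpow_add₀ (by exact_mod_cast hf.out.pos.ne' : (p:ℚ) ≠ 0), zpow_neg, zpow_neg,
      zpow_one]

omit hf in
lemma myNormNegOnePow (a : ℕ) : padicNorm p ((-1 : ℚ) ^ a) = 1 := by
  rcases Nat.even_or_odd a with h | h
  · simp [h.neg_one_pow, padicNorm.one]
  · simp [h.neg_one_pow, padicNorm.neg, padicNorm.one]

lemma myAdd4 {x1 x2 x3 x4 t : ℚ} (h1 : padicNorm p x1 ≤ t) (h2 : padicNorm p x2 ≤ t)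
    (h3 : padicNorm p x3 ≤ t) (h4 : padicNorm p x4 ≤ t) :
    padicNorm p (x1 + x2 + x3 + x4) ≤ t :=
  le_trans padicNorm.nonarchimedean (max_le
    (le_trans padicNorm.nonarchimedean (max_le
      (le_trans padicNorm.nonarchimedean (max_le h1 h2)) h3)) h4)

lemma myNormTerm (r : ℕ) {s : ℚ} (hs : padicNorm p s = 1) (m : ℕ) {d : ℕ} (hd : ¬ p ∣ d) :
    padicNorm p (s * ((p ^ r * m : ℕ) : ℚ) / ((d : ℕ) : ℚ)) ≤ (p : ℚ) ^ (-(r : ℤ)) := by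
  rw [padicNorm.div, padicNorm.mul, hs, one_mul, myNormOne hd, div_one,
    show ((p ^ r * m : ℕ) : ℚ) = ((p ^ r : ℕ) : ℚ) * ((m : ℕ) : ℚ) by push_cast; ring,
    padicNorm.mul, myNormPpow]
  have h0 : (0:ℚ) ≤ (p : ℚ) ^ (-(r : ℤ)) := by positivity
  exact mul_le_of_le_one_right h0 (padicNorm.of_nat m)

end Aux

lemma fracId (s A B C : ℚ) (hA : 0 < A) (hB : 0 < B) (hC : 0 < C) :
    (-(1:ℚ)) * s / ((A + B + C + A) * B * C) + s / (A * (A + B + C + B) * C)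
      + s / (A * B * (A + B + C + C))
      + (-(1:ℚ)) * s / ((B + C) * (A + C) * (A + B))
      - 2 * (s / (A * B * C))
    = s * ((A + B + C) * 1) / (A * (A + B + C + A) * B * C)
      - s * ((A + B + C) * 1) / (A * B * (A + B + C + B) * C)
      - s * ((A + B + C) * 1) / (A * B * C * (A + B + C + C))
      - s * ((A + B + C) * (A * B + B * C + A * C)) / (A * B * C * ((B + C) * (A + C) * (A + B))) := by
  have h1 : A + B + C + A ≠ 0 := by positivity
  have h2 : A + B + C + B ≠ 0 := by positivity
  have h3 : A + B + C + C ≠ 0 := by positivity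
  have h4 : B + C ≠ 0 := by positivity
  have h5 : A + C ≠ 0 := by positivity
  have h6 : A + B ≠ 0 := by positivity
  have hA' := hA.ne'
  have hB' := hB.ne'
  have hC' := hC.ne'
  field_simp
  ring

lemma myKey {p : ℕ} [hf : Fact p.Prime] (hodd : Odd p) {r : ℕ} (hr : 0 < r) {a b c : ℕ}
    (ha : 0 < a) (hb : 0 < b) (hc : 0 < c)
    (hpa : ¬ p ∣ a) (hpb : ¬ p ∣ b) (hpc : ¬ p ∣ c) (habc : a + b + c = p ^ r) :
    padicNorm p (
      (-1:ℚ) ^ (p ^ r + a) / (((p ^ r + a : ℕ) : ℚ) * (b : ℚ) * (c : ℚ))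
      + (-1:ℚ) ^ a / ((a : ℚ) * ((p ^ r + b : ℕ) : ℚ) * (c : ℚ))
      + (-1:ℚ) ^ a / ((a : ℚ) * (b : ℚ) * ((p ^ r + c : ℕ) : ℚ))
      + (-1:ℚ) ^ (p ^ r - a) /
          (((p ^ r - a : ℕ) : ℚ) * ((p ^ r - b : ℕ) : ℚ) * ((p ^ r - c : ℕ) : ℚ))
      - 2 * ((-1:ℚ) ^ a / ((a : ℚ) * (b : ℚ) * (c : ℚ)))) ≤ (p : ℚ) ^ (-(r : ℤ)) := by
  have hpn : p ∣ p ^ r := dvd_pow_self p hr.ne'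
  have hOddN : Odd (p ^ r) := hodd.pow
  have haN : a < p ^ r := by omega
  have hbN : b < p ^ r := by omega
  have hcN : c < p ^ r := by omega
  have h1 : (-1:ℚ) ^ (p ^ r + a) = (-(1:ℚ)) * (-1:ℚ) ^ a := by
    simp [pow_add, hOddN.neg_one_pow]
  have hsq : (-1:ℚ) ^ a * (-1:ℚ) ^ a = 1 := by
    rw [← pow_add]
    exact Even.neg_one_pow ⟨a, by ring⟩
  have h2 : (-1:ℚ) ^ (p ^ r - a) = (-(1:ℚ)) * (-1:ℚ) ^ a := by
    have hx : (-1:ℚ) ^ (p ^ r - a) * (-1:ℚ) ^ a = -1 := by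
      rw [← pow_add, Nat.sub_add_cancel haN.le]
      exact hOddN.neg_one_pow
    calc (-1:ℚ) ^ (p ^ r - a) = (-1:ℚ) ^ (p ^ r - a) * ((-1:ℚ) ^ a * (-1:ℚ) ^ a) := by
          rw [hsq, mul_one]
      _ = ((-1:ℚ) ^ (p ^ r - a) * (-1:ℚ) ^ a) * (-1:ℚ) ^ a := by ring
      _ = (-(1:ℚ)) * (-1:ℚ) ^ a := by rw [hx]
  have hNc : ((p ^ r : ℕ) : ℚ) = (a : ℚ) + b + c := by
    push_cast; exact_mod_cast habc.symm
  have c1 : ((p ^ r + a : ℕ) : ℚ) = (a : ℚ) + b + c + a := by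
    push_cast [← hNc]; push_cast; ring
  have c2 : ((p ^ r + b : ℕ) : ℚ) = (a : ℚ) + b + c + b := by
    push_cast [← hNc]; push_cast; ring
  have c3 : ((p ^ r + c : ℕ) : ℚ) = (a : ℚ) + b + c + c := by
    push_cast [← hNc]; push_cast; ring
  have c4 : ((p ^ r - a : ℕ) : ℚ) = (b : ℚ) + c := by
    rw [show p ^ r - a = b + c by omega]; push_cast; ring
  have c5 : ((p ^ r - b : ℕ) : ℚ) = (a : ℚ) + c := by
    rw [show p ^ r - b = a + c by omega]; push_cast; ring
  have c6 : ((p ^ r - c : ℕ) : ℚ) = (a : ℚ) + b := by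
    rw [show p ^ r - c = a + b by omega]; push_cast; ring
  have haq : (0:ℚ) < a := by exact_mod_cast ha
  have hbq : (0:ℚ) < b := by exact_mod_cast hb
  have hcq : (0:ℚ) < c := by exact_mod_cast hc
  rw [h1, h2, c1, c2, c3, c4, c5, c6, fracId _ _ _ _ haq hbq hcq]
  set s : ℚ := (-1:ℚ) ^ a with hs
  have hsn : padicNorm p s = 1 := myNormNegOnePow a
  have hNsum' : (a:ℚ) + b + c = (p : ℚ) ^ r := by push_cast at hNc; exact hNc.symm
  have dv1 : ¬ p ∣ a * (p ^ r + a) * b * c := by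
    intro h
    rcases (Nat.Prime.dvd_mul hf.out).mp h with h | h
    · rcases (Nat.Prime.dvd_mul hf.out).mp h with h | h
      · rcases (Nat.Prime.dvd_mul hf.out).mp h with h | h
        · exact hpa h
        · exact hpa ((Nat.dvd_add_right hpn).mp h)
      · exact hpb h
    · exact hpc h
  have dv2 : ¬ p ∣ a * b * (p ^ r + b) * c := by
    intro h
    rcases (Nat.Prime.dvd_mul hf.out).mp h with h | h
    · rcases (Nat.Prime.dvd_mul hf.out).mp h with h | h
      · rcases (Nat.Prime.dvd_mul hf.out).mp h with h | h
        · exact hpa h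
        · exact hpb h
      · exact hpb ((Nat.dvd_add_right hpn).mp h)
    · exact hpc h
  have dv3 : ¬ p ∣ a * b * c * (p ^ r + c) := by
    intro h
    rcases (Nat.Prime.dvd_mul hf.out).mp h with h | h
    · rcases (Nat.Prime.dvd_mul hf.out).mp h with h | h
      · rcases (Nat.Prime.dvd_mul hf.out).mp h with h | h
        · exact hpa h
        · exact hpb h
      · exact hpc h
    · exact hpc ((Nat.dvd_add_right hpn).mp h)
  have hbc : ¬ p ∣ b + c := by
    intro h
    have h' := Nat.dvd_sub hpn h
    rw [show p ^ r - (b + c) = a by omega] at h'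
    exact hpa h'
  have hac : ¬ p ∣ a + c := by
    intro h
    have h' := Nat.dvd_sub hpn h
    rw [show p ^ r - (a + c) = b by omega] at h'
    exact hpb h'
  have hab : ¬ p ∣ a + b := by
    intro h
    have h' := Nat.dvd_sub hpn h
    rw [show p ^ r - (a + b) = c by omega] at h'
    exact hpc h'
  have dv4 : ¬ p ∣ a * b * c * ((b + c) * (a + c) * (a + b)) := by
    intro h
    rcases (Nat.Prime.dvd_mul hf.out).mp h with h | h
    · rcases (Nat.Prime.dvd_mul hf.out).mp h with h | h
      · rcases (Nat.Prime.dvd_mul hf.out).mp h with h | h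
        · exact hpa h
        · exact hpb h
      · exact hpc h
    · rcases (Nat.Prime.dvd_mul hf.out).mp h with h | h
      · rcases (Nat.Prime.dvd_mul hf.out).mp h with h | h
        · exact hbc h
        · exact hac h
      · exact hab h
  have t1 : s * (((a:ℚ) + b + c) * 1) / ((a:ℚ) * ((a:ℚ) + b + c + a) * b * c)
      = s * ((p ^ r * 1 : ℕ) : ℚ) / ((a * (p ^ r + a) * b * c : ℕ) : ℚ) := by
    push_cast; rw [← hNsum']; try ring
  have t2 : s * (((a:ℚ) + b + c) * 1) / ((a:ℚ) * b * ((a:ℚ) + b + c + b) * c)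
      = s * ((p ^ r * 1 : ℕ) : ℚ) / ((a * b * (p ^ r + b) * c : ℕ) : ℚ) := by
    push_cast; rw [← hNsum']; try ring
  have t3 : s * (((a:ℚ) + b + c) * 1) / ((a:ℚ) * b * c * ((a:ℚ) + b + c + c))
      = s * ((p ^ r * 1 : ℕ) : ℚ) / ((a * b * c * (p ^ r + c) : ℕ) : ℚ) := by
    push_cast; rw [← hNsum']; try ring
  have t4 : s * (((a:ℚ) + b + c) * ((a:ℚ) * b + (b:ℚ) * c + (a:ℚ) * c))
        / ((a:ℚ) * b * c * (((b:ℚ) + c) * ((a:ℚ) + c) * ((a:ℚ) + b)))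
      = s * ((p ^ r * (a * b + b * c + a * c) : ℕ) : ℚ)
        / ((a * b * c * ((b + c) * (a + c) * (a + b)) : ℕ) : ℚ) := by
    push_cast; rw [← hNsum']; try ring
  rw [t1, t2, t3, t4]
  have hsplit : s * ((p ^ r * 1 : ℕ) : ℚ) / ((a * (p ^ r + a) * b * c : ℕ) : ℚ)
      - s * ((p ^ r * 1 : ℕ) : ℚ) / ((a * b * (p ^ r + b) * c : ℕ) : ℚ)
      - s * ((p ^ r * 1 : ℕ) : ℚ) / ((a * b * c * (p ^ r + c) : ℕ) : ℚ)
      - s * ((p ^ r * (a * b + b * c + a * c) : ℕ) : ℚ)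
          / ((a * b * c * ((b + c) * (a + c) * (a + b)) : ℕ) : ℚ)
      = s * ((p ^ r * 1 : ℕ) : ℚ) / ((a * (p ^ r + a) * b * c : ℕ) : ℚ)
      + (-(s * ((p ^ r * 1 : ℕ) : ℚ) / ((a * b * (p ^ r + b) * c : ℕ) : ℚ)))
      + (-(s * ((p ^ r * 1 : ℕ) : ℚ) / ((a * b * c * (p ^ r + c) : ℕ) : ℚ)))
      + (-(s * ((p ^ r * (a * b + b * c + a * c) : ℕ) : ℚ)
          / ((a * b * c * ((b + c) * (a + c) * (a + b)) : ℕ) : ℚ))) := by ring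
  rw [hsplit]
  refine myAdd4 (myNormTerm r hsn 1 dv1) ?_ ?_ ?_
  · rw [padicNorm.neg]; exact myNormTerm r hsn 1 dv2
  · rw [padicNorm.neg]; exact myNormTerm r hsn 1 dv3
  · rw [padicNorm.neg]; exact myNormTerm r hsn _ dv4


lemma memIff (p n : ℕ) (v : Fin 3 → ℕ) :
    v ∈ (Finset.Nat.antidiagonalTuple 3 n).filter
        (fun v => ∀ i, 0 < v i ∧ Nat.Coprime (v i) p)
    ↔ (v 0 + v 1 + v 2 = n ∧ ∀ i : Fin 3, 0 < v i ∧ Nat.Coprime (v i) p) := by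
  rw [Finset.mem_filter, Finset.Nat.mem_antidiagonalTuple, Fin.sum_univ_three]

lemma copIff {p : ℕ} (hp : p.Prime) (n : ℕ) : Nat.Coprime n p ↔ ¬ p ∣ n := by
  rw [Nat.coprime_comm]; exact hp.coprime_iff_not_dvd

lemma mySplit (p : ℕ) (hp : p.Prime) (r : ℕ) (hr : 0 < r) :
    (∑ v ∈ (Finset.Nat.antidiagonalTuple 3 (2 * p ^ r)).filter
        (fun v => ∀ i, 0 < v i ∧ Nat.Coprime (v i) p),
      (-1 : ℚ) ^ (v 0) / ((v 0 : ℚ) * (v 1 : ℚ) * (v 2 : ℚ)))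
    = ∑ w ∈ (Finset.Nat.antidiagonalTuple 3 (p ^ r)).filter
        (fun v => ∀ i, 0 < v i ∧ Nat.Coprime (v i) p),
      ((-1:ℚ) ^ (p ^ r + w 0) / (((p ^ r + w 0 : ℕ) : ℚ) * (w 1 : ℚ) * (w 2 : ℚ))
      + (-1:ℚ) ^ (w 0) / ((w 0 : ℚ) * ((p ^ r + w 1 : ℕ) : ℚ) * (w 2 : ℚ))
      + (-1:ℚ) ^ (w 0) / ((w 0 : ℚ) * (w 1 : ℚ) * ((p ^ r + w 2 : ℕ) : ℚ))
      + (-1:ℚ) ^ (p ^ r - w 0) /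
          (((p ^ r - w 0 : ℕ) : ℚ) * ((p ^ r - w 1 : ℕ) : ℚ) * ((p ^ r - w 2 : ℕ) : ℚ))) := by
  classical
  have hpn : p ∣ p ^ r := dvd_pow_self p hr.ne'
  set N := p ^ r with hN
  set T := (Finset.Nat.antidiagonalTuple 3 (2 * N)).filter
      (fun v => ∀ i, 0 < v i ∧ Nat.Coprime (v i) p) with hT
  set S := (Finset.Nat.antidiagonalTuple 3 N).filter
      (fun v => ∀ i, 0 < v i ∧ Nat.Coprime (v i) p) with hS
  set f : (Fin 3 → ℕ) → ℚ := fun v => (-1 : ℚ) ^ (v 0) / ((v 0 : ℚ) * (v 1 : ℚ) * (v 2 : ℚ))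
    with hf
  have hTfact : ∀ v ∈ T, v 0 + v 1 + v 2 = 2 * N ∧ (∀ i : Fin 3, 0 < v i ∧ ¬ p ∣ v i)
      ∧ (∀ i : Fin 3, v i ≠ N) := by
    intro v hv
    obtain ⟨hsum, hP⟩ := (memIff p (2 * N) v).mp hv
    refine ⟨hsum, fun i => ⟨(hP i).1, (copIff hp _).mp (hP i).2⟩, fun i hi => ?_⟩
    exact ((copIff hp _).mp (hP i).2) (hi ▸ hpn)
  have hSfact : ∀ w ∈ S, w 0 + w 1 + w 2 = N ∧ (∀ i : Fin 3, 0 < w i ∧ ¬ p ∣ w i) := by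
    intro w hw
    obtain ⟨hsum, hP⟩ := (memIff p N w).mp hw
    exact ⟨hsum, fun i => ⟨(hP i).1, (copIff hp _).mp (hP i).2⟩⟩
  have copOf : ∀ n : ℕ, ¬ p ∣ n → Nat.Coprime n p := fun n h => (copIff hp _).mpr h
  -- split T into four pieces
  rw [← Finset.sum_filter_add_sum_filter_not T (fun v => N < v 0) f,
      ← Finset.sum_filter_add_sum_filter_not (T.filter (fun v => ¬ N < v 0))
        (fun v => N < v 1) f,
      ← Finset.sum_filter_add_sum_filter_not ((T.filter (fun v => ¬ N < v 0)).filter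
        (fun v => ¬ N < v 1)) (fun v => N < v 2) f]
  have e0 : ∑ v ∈ T.filter (fun v => N < v 0), f v
      = ∑ w ∈ S, (-1:ℚ) ^ (N + w 0) / (((N + w 0 : ℕ) : ℚ) * (w 1 : ℚ) * (w 2 : ℚ)) := by
    refine Finset.sum_nbij' (fun v => ![v 0 - N, v 1, v 2]) (fun w => ![N + w 0, w 1, w 2])
        ?_ ?_ ?_ ?_ ?_
    · intro v hv
      rw [Finset.mem_filter] at hv
      obtain ⟨hsum, hPd, hne⟩ := hTfact v hv.1
      have hlt : N < v 0 := hv.2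
      rw [memIff]
      refine ⟨by simp; omega, ?_⟩
      intro i
      fin_cases i <;> simp
      · refine ⟨by omega, copOf _ ?_⟩
        intro h
        exact (hPd 0).2 (by
          have : p ∣ (v 0 - N) + N := Nat.dvd_add h hpn
          rwa [Nat.sub_add_cancel (le_of_lt hlt)] at this)
      · exact ⟨(hPd 1).1, copOf _ (hPd 1).2⟩
      · exact ⟨(hPd 2).1, copOf _ (hPd 2).2⟩
    · intro w hw
      obtain ⟨hsum, hPd⟩ := hSfact w hw
      rw [Finset.mem_filter, memIff]
      refine ⟨⟨by simp; omega, ?_⟩, by simp; have := (hPd 0).1; omega⟩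
      intro i
      fin_cases i <;> simp
      · refine ⟨by have := (hPd 0).1; omega, copOf _ ?_⟩
        intro h
        exact (hPd 0).2 ((Nat.dvd_add_right hpn).mp h)
      · exact ⟨(hPd 1).1, copOf _ (hPd 1).2⟩
      · exact ⟨(hPd 2).1, copOf _ (hPd 2).2⟩
    · intro v hv
      rw [Finset.mem_filter] at hv
      have hlt : N < v 0 := hv.2
      funext x; fin_cases x <;> simp <;> omega
    · intro w hw
      funext x; fin_cases x <;> simp <;> omega
    · intro v hv
      rw [Finset.mem_filter] at hv
      have hlt : N < v 0 := hv.2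
      simp only [hf, Matrix.cons_val_zero, Matrix.cons_val_one, Matrix.head_cons,
        Matrix.cons_val_two, Matrix.tail_cons]
      rw [Nat.add_sub_cancel' (le_of_lt hlt)]
  have e1 : ∑ v ∈ (T.filter (fun v => ¬ N < v 0)).filter (fun v => N < v 1), f v
      = ∑ w ∈ S, (-1:ℚ) ^ (w 0) / ((w 0 : ℚ) * ((N + w 1 : ℕ) : ℚ) * (w 2 : ℚ)) := by
    refine Finset.sum_nbij' (fun v => ![v 0, v 1 - N, v 2]) (fun w => ![w 0, N + w 1, w 2])
        ?_ ?_ ?_ ?_ ?_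
    · intro v hv
      rw [Finset.mem_filter, Finset.mem_filter] at hv
      obtain ⟨hsum, hPd, hne⟩ := hTfact v hv.1.1
      have hlt : N < v 1 := hv.2
      rw [memIff]
      refine ⟨by simp; omega, ?_⟩
      intro i
      fin_cases i <;> simp
      · exact ⟨(hPd 0).1, copOf _ (hPd 0).2⟩
      · refine ⟨by omega, copOf _ ?_⟩
        intro h
        exact (hPd 1).2 (by
          have : p ∣ (v 1 - N) + N := Nat.dvd_add h hpn
          rwa [Nat.sub_add_cancel (le_of_lt hlt)] at this)
      · exact ⟨(hPd 2).1, copOf _ (hPd 2).2⟩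
    · intro w hw
      obtain ⟨hsum, hPd⟩ := hSfact w hw
      rw [Finset.mem_filter, Finset.mem_filter, memIff]
      have h0 := (hPd 0).1; have h1 := (hPd 1).1; have h2 := (hPd 2).1
      refine ⟨⟨⟨by simp; omega, ?_⟩, by simp; omega⟩, by simp; omega⟩
      intro i
      fin_cases i <;> simp
      · exact ⟨h0, copOf _ (hPd 0).2⟩
      · refine ⟨by omega, copOf _ ?_⟩
        intro h
        exact (hPd 1).2 ((Nat.dvd_add_right hpn).mp h)
      · exact ⟨h2, copOf _ (hPd 2).2⟩
    · intro v hv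
      rw [Finset.mem_filter, Finset.mem_filter] at hv
      have hlt : N < v 1 := hv.2
      funext x; fin_cases x <;> simp <;> omega
    · intro w hw
      funext x; fin_cases x <;> simp <;> omega
    · intro v hv
      rw [Finset.mem_filter, Finset.mem_filter] at hv
      have hlt : N < v 1 := hv.2
      simp only [hf, Matrix.cons_val_zero, Matrix.cons_val_one, Matrix.head_cons,
        Matrix.cons_val_two, Matrix.tail_cons]
      rw [Nat.add_sub_cancel' (le_of_lt hlt)]
  have e2 : ∑ v ∈ ((T.filter (fun v => ¬ N < v 0)).filter (fun v => ¬ N < v 1)).filter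
        (fun v => N < v 2), f v
      = ∑ w ∈ S, (-1:ℚ) ^ (w 0) / ((w 0 : ℚ) * (w 1 : ℚ) * ((N + w 2 : ℕ) : ℚ)) := by
    refine Finset.sum_nbij' (fun v => ![v 0, v 1, v 2 - N]) (fun w => ![w 0, w 1, N + w 2])
        ?_ ?_ ?_ ?_ ?_
    · intro v hv
      rw [Finset.mem_filter, Finset.mem_filter, Finset.mem_filter] at hv
      obtain ⟨hsum, hPd, hne⟩ := hTfact v hv.1.1.1
      have hlt : N < v 2 := hv.2
      rw [memIff]
      refine ⟨by simp; omega, ?_⟩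
      intro i
      fin_cases i <;> simp
      · exact ⟨(hPd 0).1, copOf _ (hPd 0).2⟩
      · exact ⟨(hPd 1).1, copOf _ (hPd 1).2⟩
      · refine ⟨by omega, copOf _ ?_⟩
        intro h
        exact (hPd 2).2 (by
          have : p ∣ (v 2 - N) + N := Nat.dvd_add h hpn
          rwa [Nat.sub_add_cancel (le_of_lt hlt)] at this)
    · intro w hw
      obtain ⟨hsum, hPd⟩ := hSfact w hw
      rw [Finset.mem_filter, Finset.mem_filter, Finset.mem_filter, memIff]
      have h0 := (hPd 0).1; have h1 := (hPd 1).1; have h2 := (hPd 2).1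
      refine ⟨⟨⟨⟨by simp; omega, ?_⟩, by simp; omega⟩, by simp; omega⟩, by simp; omega⟩
      intro i
      fin_cases i <;> simp
      · exact ⟨h0, copOf _ (hPd 0).2⟩
      · exact ⟨h1, copOf _ (hPd 1).2⟩
      · refine ⟨by omega, copOf _ ?_⟩
        intro h
        exact (hPd 2).2 ((Nat.dvd_add_right hpn).mp h)
    · intro v hv
      rw [Finset.mem_filter, Finset.mem_filter, Finset.mem_filter] at hv
      have hlt : N < v 2 := hv.2
      funext x; fin_cases x <;> simp <;> omega
    · intro w hw
      funext x; fin_cases x <;> simp <;> omega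
    · intro v hv
      rw [Finset.mem_filter, Finset.mem_filter, Finset.mem_filter] at hv
      have hlt : N < v 2 := hv.2
      simp only [hf, Matrix.cons_val_zero, Matrix.cons_val_one, Matrix.head_cons,
        Matrix.cons_val_two, Matrix.tail_cons]
      rw [Nat.add_sub_cancel' (le_of_lt hlt)]
  have e3 : ∑ v ∈ ((T.filter (fun v => ¬ N < v 0)).filter (fun v => ¬ N < v 1)).filter
        (fun v => ¬ N < v 2), f v
      = ∑ w ∈ S, (-1:ℚ) ^ (N - w 0) /
          (((N - w 0 : ℕ) : ℚ) * ((N - w 1 : ℕ) : ℚ) * ((N - w 2 : ℕ) : ℚ)) := by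
    refine Finset.sum_nbij' (fun v => ![N - v 0, N - v 1, N - v 2])
        (fun w => ![N - w 0, N - w 1, N - w 2]) ?_ ?_ ?_ ?_ ?_
    · intro v hv
      rw [Finset.mem_filter, Finset.mem_filter, Finset.mem_filter] at hv
      obtain ⟨hsum, hPd, hne⟩ := hTfact v hv.1.1.1
      have hle0 : v 0 ≤ N := not_lt.mp hv.1.1.2
      have hle1 : v 1 ≤ N := not_lt.mp hv.1.2
      have hle2 : v 2 ≤ N := not_lt.mp hv.2
      have hne0 := hne 0; have hne1 := hne 1; have hne2 := hne 2
      rw [memIff]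
      have copkey : ∀ i : Fin 3, v i ≤ N → Nat.Coprime (N - v i) p := by
        intro i hvi
        refine copOf _ ?_
        intro h
        have h' := Nat.dvd_sub hpn h
        rw [Nat.sub_sub_self hvi] at h'
        exact (hPd i).2 h'
      refine ⟨by simp only [Matrix.cons_val_zero, Matrix.cons_val_one, Matrix.head_cons,
        Matrix.cons_val_two, Matrix.tail_cons]; omega, ?_⟩
      intro i
      fin_cases i <;> simp
      · exact ⟨lt_of_le_of_ne hle0 hne0, copkey 0 hle0⟩
      · exact ⟨lt_of_le_of_ne hle1 hne1, copkey 1 hle1⟩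
      · exact ⟨lt_of_le_of_ne hle2 hne2, copkey 2 hle2⟩
    · intro w hw
      obtain ⟨hsum, hPd⟩ := hSfact w hw
      have h0 := (hPd 0).1; have h1 := (hPd 1).1; have h2 := (hPd 2).1
      rw [Finset.mem_filter, Finset.mem_filter, Finset.mem_filter, memIff]
      have copkey : ∀ i : Fin 3, w i ≤ N → Nat.Coprime (N - w i) p := by
        intro i hwi
        refine copOf _ ?_
        intro h
        have h' := Nat.dvd_sub hpn h
        rw [Nat.sub_sub_self hwi] at h'
        exact (hPd i).2 h'
      have hw0 : w 0 < N := by omega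
      have hw1 : w 1 < N := by omega
      have hw2 : w 2 < N := by omega
      refine ⟨⟨⟨⟨by simp only [Matrix.cons_val_zero, Matrix.cons_val_one, Matrix.head_cons,
          Matrix.cons_val_two, Matrix.tail_cons]; omega, ?_⟩,
        by simp only [Matrix.cons_val_zero]; omega⟩,
        by simp only [Matrix.cons_val_one, Matrix.head_cons, Matrix.cons_val_zero]; omega⟩,
        by simp only [Matrix.cons_val_two, Matrix.tail_cons, Matrix.head_cons]; omega⟩
      intro i
      fin_cases i <;> simp
      · exact ⟨hw0, copkey 0 hw0.le⟩
      · exact ⟨hw1, copkey 1 hw1.le⟩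
      · exact ⟨hw2, copkey 2 hw2.le⟩
    · intro v hv
      rw [Finset.mem_filter, Finset.mem_filter, Finset.mem_filter] at hv
      have hle0 : v 0 ≤ N := not_lt.mp hv.1.1.2
      have hle1 : v 1 ≤ N := not_lt.mp hv.1.2
      have hle2 : v 2 ≤ N := not_lt.mp hv.2
      funext x; fin_cases x <;> simp <;> omega
    · intro w hw
      obtain ⟨hsum, hPd⟩ := hSfact w hw
      have h0 := (hPd 0).1; have h1 := (hPd 1).1; have h2 := (hPd 2).1
      funext x; fin_cases x <;> simp <;> omega
    · intro v hv
      rw [Finset.mem_filter, Finset.mem_filter, Finset.mem_filter] at hv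
      have hle0 : v 0 ≤ N := not_lt.mp hv.1.1.2
      have hle1 : v 1 ≤ N := not_lt.mp hv.1.2
      have hle2 : v 2 ≤ N := not_lt.mp hv.2
      simp only [hf, Matrix.cons_val_zero, Matrix.cons_val_one, Matrix.head_cons,
        Matrix.cons_val_two, Matrix.tail_cons]
      rw [Nat.sub_sub_self hle0, Nat.sub_sub_self hle1, Nat.sub_sub_self hle2]
  rw [e0, e1, e2, e3, ← Finset.sum_add_distrib, ← Finset.sum_add_distrib,
    ← Finset.sum_add_distrib]
  exact Finset.sum_congr rfl (fun w _ => by ring)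

/-- `x ≡ y (mod p^s)` for rational numbers: either `x = y` or the `p`-adic
valuation of `x - y` is at least `s`. -/
def RatCongr (p : ℕ) (s : ℕ) (x y : ℚ) : Prop :=
  x = y ∨ (s : ℤ) ≤ padicValRat p (x - y)

theorem alt_three_sum_two_p_pow_congr_double (p : ℕ) (hp : p.Prime) (hodd : Odd p)
    (r : ℕ) (hr : 0 < r) :
    RatCongr p r
      (∑ v ∈ (Finset.Nat.antidiagonalTuple 3 (2 * p ^ r)).filter
          (fun v => ∀ i, 0 < v i ∧ Nat.Coprime (v i) p),
        (-1 : ℚ) ^ (v 0) / ((v 0 : ℚ) * (v 1 : ℚ) * (v 2 : ℚ)))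
      (2 * ∑ v ∈ (Finset.Nat.antidiagonalTuple 3 (p ^ r)).filter
          (fun v => ∀ i, 0 < v i ∧ Nat.Coprime (v i) p),
        (-1 : ℚ) ^ (v 0) / ((v 0 : ℚ) * (v 1 : ℚ) * (v 2 : ℚ))) := by
  haveI : Fact p.Prime := ⟨hp⟩
  classical
  set A := (∑ v ∈ (Finset.Nat.antidiagonalTuple 3 (2 * p ^ r)).filter
      (fun v => ∀ i, 0 < v i ∧ Nat.Coprime (v i) p),
    (-1 : ℚ) ^ (v 0) / ((v 0 : ℚ) * (v 1 : ℚ) * (v 2 : ℚ))) with hAdef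
  set B := (∑ v ∈ (Finset.Nat.antidiagonalTuple 3 (p ^ r)).filter
      (fun v => ∀ i, 0 < v i ∧ Nat.Coprime (v i) p),
    (-1 : ℚ) ^ (v 0) / ((v 0 : ℚ) * (v 1 : ℚ) * (v 2 : ℚ))) with hBdef
  have hdiff : A - 2 * B
      = ∑ w ∈ (Finset.Nat.antidiagonalTuple 3 (p ^ r)).filter
          (fun v => ∀ i, 0 < v i ∧ Nat.Coprime (v i) p),
        ((-1:ℚ) ^ (p ^ r + w 0) / (((p ^ r + w 0 : ℕ) : ℚ) * (w 1 : ℚ) * (w 2 : ℚ))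
        + (-1:ℚ) ^ (w 0) / ((w 0 : ℚ) * ((p ^ r + w 1 : ℕ) : ℚ) * (w 2 : ℚ))
        + (-1:ℚ) ^ (w 0) / ((w 0 : ℚ) * (w 1 : ℚ) * ((p ^ r + w 2 : ℕ) : ℚ))
        + (-1:ℚ) ^ (p ^ r - w 0) /
            (((p ^ r - w 0 : ℕ) : ℚ) * ((p ^ r - w 1 : ℕ) : ℚ) * ((p ^ r - w 2 : ℕ) : ℚ))
        - 2 * ((-1 : ℚ) ^ (w 0) / ((w 0 : ℚ) * (w 1 : ℚ) * (w 2 : ℚ)))) := by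
    rw [hAdef, mySplit p hp r hr, hBdef, Finset.mul_sum, ← Finset.sum_sub_distrib]
  have hbound : padicNorm p (A - 2 * B) ≤ (p : ℚ) ^ (-(r : ℤ)) := by
    rw [hdiff]
    have hp0 : (0:ℚ) < p := by exact_mod_cast hp.pos
    refine padicNorm.sum_le' ?_ (by positivity)
    intro w hw
    obtain ⟨hsum, hP⟩ := (memIff p (p ^ r) w).mp hw
    exact myKey hodd hr (hP 0).1 (hP 1).1 (hP 2).1 ((copIff hp _).mp (hP 0).2)
      ((copIff hp _).mp (hP 1).2) ((copIff hp _).mp (hP 2).2) hsum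
  rcases eq_or_ne A (2 * B) with h | h
  · exact Or.inl h
  · refine Or.inr ?_
    have hne : A - 2 * B ≠ 0 := sub_ne_zero.mpr h
    rw [padicNorm.eq_zpow_of_nonzero hne] at hbound
    have h2 := (zpow_le_zpow_iff_right₀ (by exact_mod_cast hp.one_lt : (1:ℚ) < (p:ℚ))).mp hbound
    linarith
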